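/- arXiv:1803.05141 — 2 statements merged into one kernel-verified Lean document; each statement's English description precedes it below -/
import Mathlib

section
/- For all natural numbers m and n, gcd(B_m, B_n) = B_{gcd(m,n)}, where B is the balancing sequence. -/
def B : ℕ → ℕ
  | 0 => 0
  | 1 => 1
  | (n + 2) => 6 * B (n + 1) - B n

/-- Integer version of the balancing sequence. -/
def b : ℕ → ℤ
  | 0 => 0
  | 1 => 1
  | (n + 2) => 6 * b (n + 1) - b n

lemma b_succ_succ (n : ℕ) : b (n + 2) = 6 * b (n + 1) - b n := rfl
lemma B_succ_succ (n : ℕ) : B (n + 2) = 6 * B (n + 1) - B n := rfl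

lemma b_nonneg_mono : ∀ n : ℕ, 0 ≤ b n ∧ b n ≤ b (n + 1)
  | 0 => by norm_num [b]
  | n + 1 => by
    obtain ⟨h0, h1⟩ := b_nonneg_mono n
    refine ⟨h0.trans h1, ?_⟩
    rw [b_succ_succ]
    linarith

lemma B_cast : ∀ n : ℕ, (B n : ℤ) = b n
  | 0 => rfl
  | 1 => rfl
  | n + 2 => by
    have h0 := B_cast n
    have h1 := B_cast (n + 1)
    have hm := (b_nonneg_mono n).2
    have hn0 := (b_nonneg_mono n).1
    have hle : B n ≤ 6 * B (n + 1) := by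
      have : (B n : ℤ) ≤ 6 * (B (n + 1) : ℤ) := by rw [h0, h1]; linarith
      exact_mod_cast this
    rw [B_succ_succ, b_succ_succ]
    push_cast [Nat.cast_sub hle]
    rw [h0, h1]

lemma B_rec (n : ℕ) : B (n + 2) + B n = 6 * B (n + 1) := by
  have : ((B (n + 2) + B n : ℕ) : ℤ) = ((6 * B (n + 1) : ℕ) : ℤ) := by
    push_cast [B_cast]
    rw [b_succ_succ]; ring
  exact_mod_cast this

lemma b_add : ∀ m n : ℕ, b (m + n + 1) = b (m + 1) * b (n + 1) - b m * b n
  | 0, n => by simp [b]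
  | 1, n => by
    have : 1 + n + 1 = n + 2 := by omega
    rw [this, b_succ_succ]
    show (6 : ℤ) * b (n + 1) - b n = b 2 * b (n + 1) - b 1 * b n
    norm_num [b]
  | m + 2, n => by
    have h0 := b_add m n
    have h1 := b_add (m + 1) n
    have e1 : m + 2 + n + 1 = (m + n + 1) + 2 := by omega
    have e2 : m + 2 + 1 = (m + 1) + 2 := by omega
    rw [e1, e2, b_succ_succ, b_succ_succ (m + 1)]
    have e3 : m + n + 1 + 1 = m + 1 + n + 1 := by omega
    have e4 : m + 1 + 1 = m + 2 := by omega
    rw [e3, h1, h0, e4, b_succ_succ m]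
    ring

lemma B_add (m n : ℕ) : B (m + n + 1) + B m * B n = B (m + 1) * B (n + 1) := by
  have : ((B (m + n + 1) + B m * B n : ℕ) : ℤ) = ((B (m + 1) * B (n + 1) : ℕ) : ℤ) := by
    push_cast [B_cast]
    rw [b_add]; ring
  exact_mod_cast this

lemma B_coprime : ∀ n : ℕ, Nat.Coprime (B n) (B (n + 1))
  | 0 => by simp [B]
  | n + 1 => by
    have ih := B_coprime n
    have hd : Nat.gcd (B (n + 1)) (B (n + 2)) ∣ B n := by
      have h1 : Nat.gcd (B (n + 1)) (B (n + 2)) ∣ 6 * B (n + 1) :=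
        (Nat.gcd_dvd_left _ _).mul_left 6
      have h2 := Nat.gcd_dvd_right (B (n + 1)) (B (n + 2))
      have : B n = 6 * B (n + 1) - B (n + 2) := by
        have := B_rec n; omega
      rw [this]
      exact Nat.dvd_sub h1 h2
    have : Nat.gcd (B (n + 1)) (B (n + 2)) ∣ Nat.gcd (B n) (B (n + 1)) :=
      Nat.dvd_gcd hd (Nat.gcd_dvd_left _ _)
    have := Nat.eq_one_of_dvd_one (ih ▸ this)
    exact this

lemma gcd_B_add_self (m n : ℕ) : Nat.gcd (B m) (B (n + m)) = Nat.gcd (B m) (B n) := by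
  cases n with
  | zero => simp [B]
  | succ k =>
    have e : k + 1 + m = m + k + 1 := by omega
    calc Nat.gcd (B m) (B (k + 1 + m))
        = Nat.gcd (B m) (B (m + k + 1) + B m * B k) := by
          rw [e, Nat.gcd_add_mul_left_right]
      _ = Nat.gcd (B m) (B (m + 1) * B (k + 1)) := by rw [B_add]
      _ = Nat.gcd (B m) (B (k + 1)) :=
          Nat.Coprime.gcd_mul_left_cancel_right _ (B_coprime m).symm

lemma gcd_B_add_mul_self (m n : ℕ) : ∀ k, Nat.gcd (B m) (B (n + k * m)) = Nat.gcd (B m) (B n)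
  | 0 => by simp
  | k + 1 => by
    rw [← gcd_B_add_mul_self m n k, add_mul, ← add_assoc, one_mul, gcd_B_add_self]

theorem stmt3 : ∀ m n : ℕ, Nat.gcd (B m) (B n) = B (Nat.gcd m n) := by
  intro m n
  induction m, n using Nat.gcd.induction with
  | H0 n => simp [B]
  | H1 m n _ h' =>
    rw [← Nat.gcd_rec m n] at h'
    conv_lhs => rw [← Nat.mod_add_div' n m]
    rw [gcd_B_add_mul_self m (n % m) (n / m), Nat.gcd_comm (B m) _]
    exact h'
end

section
/- If p is a prime with p ≡ 1 (mod 8) or p ≡ 7 (mod 8), then p divides B_{p-1}; and if p ≡ 3 (mod 8) or p ≡ 5 (mod 8), then p divides B_{p+1}, where B is the balancing sequence. -/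
lemma B_mono : ∀ n, B n ≤ B (n + 1) := by
  intro n
  induction n using Nat.strong_induction_on with
  | _ n ih =>
    match n with
    | 0 => simp [B]
    | 1 => simp [B]
    | (m + 2) =>
      have h1 := ih (m + 1) (by omega)
      have h0 := ih m (by omega)
      show B (m+2) ≤ 6 * B (m + 2) - B (m + 1)
      have e : B (m + 2) = 6 * B (m + 1) - B m := rfl
      omega

lemma B_cast_s5 {K : Type} [CommRing K] (n : ℕ) :
    (B (n + 2) : K) = 6 * B (n + 1) - B n := by
  have h0 : B n ≤ B (n + 1) := B_mono n
  have e : B (n + 2) = 6 * B (n + 1) - B n := rfl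
  rw [e, Nat.cast_sub (by omega)]
  push_cast
  ring

lemma key {K : Type} [CommRing K] (s : K) (hs : s ^ 2 = 2) :
    ∀ n, (B n : K) * (4 * s) = (3 + 2 * s) ^ n - (3 - 2 * s) ^ n := by
  have H : ∀ n, (B n : K) * (4 * s) = (3 + 2 * s) ^ n - (3 - 2 * s) ^ n ∧
      (B (n+1) : K) * (4 * s) = (3 + 2 * s) ^ (n+1) - (3 - 2 * s) ^ (n+1) := by
    intro n
    induction n with
    | zero => constructor <;> simp [B] <;> ring
    | succ n ih =>
      refine ⟨ih.2, ?_⟩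
      rw [B_cast_s5]
      have hα : (3 + 2 * s) ^ (n + 2) = 6 * (3 + 2 * s) ^ (n+1) - (3 + 2 * s) ^ n := by
        linear_combination (4 * (3 + 2 * s) ^ n) * hs
      have hβ : (3 - 2 * s) ^ (n + 2) = 6 * (3 - 2 * s) ^ (n+1) - (3 - 2 * s) ^ n := by
        linear_combination (4 * (3 - 2 * s) ^ n) * hs
      linear_combination 6 * ih.2 - ih.1 + hα - hβ + (8 * ((3 - 2*s) ^ n - (3 + 2*s) ^ n)) * hs
  exact fun n => (H n).1

theorem stmt5 : ∀ p : ℕ, p.Prime →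
    ((p % 8 = 1 ∨ p % 8 = 7) → p ∣ B (p - 1)) ∧
    ((p % 8 = 3 ∨ p % 8 = 5) → p ∣ B (p + 1)) := by
  intro p hp
  have hfact : Fact p.Prime := ⟨hp⟩
  have hdvd2 : ¬ (p ∣ 2) → (2 : ZMod p) ≠ 0 := by
    intro h
    have : ((2 : ℕ) : ZMod p) ≠ 0 := by
      rw [Ne, ZMod.natCast_eq_zero_iff]; exact h
    simpa using this
  constructor
  · -- p ≡ 1, 7 mod 8
    intro h8
    have hp2 : p ≠ 2 := by omega
    have h2ne : (2 : ZMod p) ≠ 0 := hdvd2 (fun h => hp2 ((Nat.prime_dvd_prime_iff_eq hp Nat.prime_two).mp h))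
    obtain ⟨s, hs⟩ := (ZMod.exists_sq_eq_two_iff hp2).mpr h8
    have hs2 : s ^ 2 = 2 := by rw [sq]; exact hs.symm
    have hprod : (3 + 2 * s) * (3 - 2 * s) = 1 := by linear_combination (-4 : ZMod p) * hs2
    have hαne : (3 + 2 * s : ZMod p) ≠ 0 := fun h => by simp [h] at hprod
    have hβne : (3 - 2 * s : ZMod p) ≠ 0 := fun h => by simp [h] at hprod
    have h1 : (3 + 2 * s : ZMod p) ^ (p - 1) = 1 := ZMod.pow_card_sub_one_eq_one hαne
    have h2 : (3 - 2 * s : ZMod p) ^ (p - 1) = 1 := ZMod.pow_card_sub_one_eq_one hβne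
    have hk := key s hs2 (p - 1)
    rw [h1, h2, sub_self] at hk
    have hsne : s ≠ 0 := by
      intro h; rw [h] at hs2; simp at hs2; exact h2ne hs2.symm
    have h4s : (4 * s : ZMod p) ≠ 0 := by
      have h4 : (4 : ZMod p) ≠ 0 := by
        intro h
        have : (2 : ZMod p) * 2 = 0 := by rw [← h]; norm_num
        rcases mul_eq_zero.mp this with h' | h' <;> exact h2ne h'
      exact mul_ne_zero h4 hsne
    have : (B (p - 1) : ZMod p) = 0 := by
      rcases mul_eq_zero.mp hk with h | h
      · exact h
      · exact absurd h h4s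
    exact (ZMod.natCast_eq_zero_iff _ _).mp this
  · -- p ≡ 3, 5 mod 8
    intro h8
    have hp2 : p ≠ 2 := by omega
    have h2ne : (2 : ZMod p) ≠ 0 := hdvd2 (fun h => hp2 ((Nat.prime_dvd_prime_iff_eq hp Nat.prime_two).mp h))
    have hnsq : ¬ IsSquare (2 : ZMod p) := by
      rw [ZMod.exists_sq_eq_two_iff hp2]; omega
    -- Euler: 2 ^ (p/2) = -1
    have heuler : (2 : ZMod p) ^ (p / 2) = -1 := by
      rcases ZMod.pow_div_two_eq_neg_one_or_one p h2ne with h | h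
      · exact absurd ((ZMod.euler_criterion p h2ne).mpr h) hnsq
      · exact h
    set f : Polynomial (ZMod p) := Polynomial.X ^ 2 - Polynomial.C 2 with hf
    have hdeg : f.degree = 2 := by
      rw [hf]
      compute_degree!
    have : Nontrivial (AdjoinRoot f) := AdjoinRoot.nontrivial f (by rw [hdeg]; norm_num)
    letI : CharP (AdjoinRoot f) p :=
      charP_of_injective_ringHom (algebraMap (ZMod p) (AdjoinRoot f)).injective p
    set r : AdjoinRoot f := AdjoinRoot.root f with hr
    have hr2 : r ^ 2 = 2 := by
      have := AdjoinRoot.eval₂_root f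
      rw [hf] at this
      simp [Polynomial.eval₂_sub, Polynomial.eval₂_pow] at this
      rw [sub_eq_zero] at this
      simpa [hr, hf, map_ofNat] using this
    -- Frobenius
    have hmap : ∀ a : ZMod p, (AdjoinRoot.of f a) ^ p = AdjoinRoot.of f a := fun a => by
      rw [← map_pow, ZMod.pow_card]
    have h2pow : (2 : AdjoinRoot f) ^ (p / 2) = -1 := by
      have h := congrArg (AdjoinRoot.of f) heuler
      simpa [map_pow, map_ofNat, map_neg, map_one] using h
    have hodd : p % 2 = 1 := by omega
    have hrp : r ^ p = -r := by
      have hpe : p = 2 * (p / 2) + 1 := by omega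
      calc r ^ p = (r ^ 2) ^ (p / 2) * r := by rw [← pow_mul, ← pow_succ, ← hpe]
        _ = (2 : AdjoinRoot f) ^ (p / 2) * r := by rw [hr2]
        _ = -r := by rw [h2pow]; ring
    have hfrob : (3 + 2 * r) ^ p = 3 - 2 * r := by
      have h1 : ((3 : AdjoinRoot f) + 2 * r) ^ p = 3 ^ p + (2 * r) ^ p := add_pow_char _ _ _
      rw [h1, mul_pow, hrp]
      have h3 : (3 : AdjoinRoot f) ^ p = 3 := by
        simpa [map_ofNat] using hmap 3
      have h2 : (2 : AdjoinRoot f) ^ p = 2 := by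
        simpa [map_ofNat] using hmap 2
      rw [h3, h2]
      ring
    have hfrob' : (3 - 2 * r) ^ p = 3 + 2 * r := by
      have h1 : ((3 : AdjoinRoot f) - 2 * r) ^ p = 3 ^ p - (2 * r) ^ p := sub_pow_char _ _
      rw [h1, mul_pow, hrp]
      have h3 : (3 : AdjoinRoot f) ^ p = 3 := by
        simpa [map_ofNat] using hmap 3
      have h2 : (2 : AdjoinRoot f) ^ p = 2 := by
        simpa [map_ofNat] using hmap 2
      rw [h3, h2]
      ring
    have hprod : (3 + 2 * r) * (3 - 2 * r) = 1 := by linear_combination (-4 : AdjoinRoot f) * hr2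
    have hα : (3 + 2 * r) ^ (p + 1) = 1 := by
      rw [pow_succ, hfrob, mul_comm]; exact hprod
    have hβ : (3 - 2 * r) ^ (p + 1) = 1 := by
      rw [pow_succ, hfrob', mul_comm]
      linear_combination hprod
    have hk := key r hr2 (p + 1)
    rw [hα, hβ, sub_self] at hk
    -- 4r is a unit
    have h2u : IsUnit (2 : AdjoinRoot f) := by
      have h := ((isUnit_iff_ne_zero).mpr h2ne).map (algebraMap (ZMod p) (AdjoinRoot f))
      rwa [map_ofNat] at h
    have hru : IsUnit r := by
      refine IsUnit.of_mul_eq_one (a := r) (r * (↑h2u.unit⁻¹ : (AdjoinRoot f)ˣ)) ?_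
      rw [← mul_assoc, ← sq, hr2]
      exact h2u.mul_val_inv
    have h4u : IsUnit (4 * r : AdjoinRoot f) := by
      have h4 : IsUnit (4 : AdjoinRoot f) := by
        have : (4 : AdjoinRoot f) = 2 * 2 := by norm_num
        rw [this]; exact h2u.mul h2u
      exact h4.mul hru
    have hz : ((B (p + 1) : ℕ) : AdjoinRoot f) = 0 := h4u.mul_left_eq_zero.mp hk
    have : (B (p + 1) : ZMod p) = 0 := by
      have hinj : Function.Injective (algebraMap (ZMod p) (AdjoinRoot f)) :=
        (algebraMap (ZMod p) (AdjoinRoot f)).injective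
      apply hinj
      rw [map_natCast, map_zero]
      exact hz
    exact (ZMod.natCast_eq_zero_iff _ _).mp this
end
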